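/- Let G be a simple graph on vertex set V with a proper coloring c : V → ZMod 3, and let k ≥ 1 be a natural number. Form the k-blowup of G on V × ZMod k, and for each pair (i,j) ∈ ZMod k × ZMod k define the set S_{i,j} = { (v,l) : (c v = 0 and l = i) or (c v = 1 and l = j) or (c v = 2 and l = -(i+j)) }. Then for every edge of the k-blowup of G there is exactly one pair (i,j) such that both endpoints of the edge belong to S_{i,j}. -/
import Mathlib


/-- The `k`-blowup of a simple graph `G` on `V`, here taken on `V × ZMod k`:
`(u,i)` and `(v,j)` are adjacent iff `u` and `v` are adjacent in `G`. -/
def zblowup {V : Type*} (G : SimpleGraph V) (k : ℕ) : SimpleGraph (V × ZMod k) :=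
  G.comap Prod.fst

/-- Membership of a blowup vertex `p = (v, l)` in the set `S_{i,j}`:
`(v,l) ∈ S_{i,j}` iff (`c v = 0` and `l = i`) or (`c v = 1` and `l = j`) or
(`c v = 2` and `l = -(i+j)`). -/
def memS {V : Type*} {k : ℕ} (c : V → ZMod 3) (i j : ZMod k) (p : V × ZMod k) : Prop :=
  (c p.1 = 0 ∧ p.2 = i) ∨ (c p.1 = 1 ∧ p.2 = j) ∨ (c p.1 = 2 ∧ p.2 = -(i + j))

/-- If `c` is a proper 3-coloring of `G` and `k ≥ 1`, then every edge of the
`k`-blowup of `G` has both endpoints in exactly one of the `k²` sets `S_{i,j}`. -/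
theorem blowup_coloring_edge_unique_set {V : Type*} (G : SimpleGraph V)
    (c : V → ZMod 3) (hc : ∀ {u v : V}, G.Adj u v → c u ≠ c v)
    (k : ℕ) (hk : 1 ≤ k) :
    ∀ p q : V × ZMod k, (zblowup G k).Adj p q →
      ∃! ij : ZMod k × ZMod k, memS c ij.1 ij.2 p ∧ memS c ij.1 ij.2 q := by
  intro p q hadj
  have hne : c p.1 ≠ c q.1 := hc hadj
  have tri : ∀ x : ZMod 3, x = 0 ∨ x = 1 ∨ x = 2 := by decide
  have n01 : (0 : ZMod 3) ≠ 1 := by decide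
  have n02 : (0 : ZMod 3) ≠ 2 := by decide
  have n10 : (1 : ZMod 3) ≠ 0 := by decide
  have n12 : (1 : ZMod 3) ≠ 2 := by decide
  have n20 : (2 : ZMod 3) ≠ 0 := by decide
  have n21 : (2 : ZMod 3) ≠ 1 := by decide
  rcases tri (c p.1) with ha | ha | ha <;> rcases tri (c q.1) with hb | hb | hb
  · exact absurd (ha.trans hb.symm) hne
  · -- colors (0,1), witness (p.2, q.2)
    refine ⟨(p.2, q.2),
      by refine ⟨?_, ?_⟩ <;> simp [memS, ha, hb, n01, n02, n10, n12, n20, n21] <;> try ring, ?_⟩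
    rintro ⟨i, j⟩ ⟨hp, hq⟩
    simp [memS, ha, hb, n01, n02, n10, n12, n20, n21] at hp hq
    simp only [Prod.mk.injEq]
    exact ⟨by linear_combination -hp, by linear_combination -hq⟩
  · -- colors (0,2), witness (p.2, -q.2 - p.2)
    refine ⟨(p.2, -q.2 - p.2),
      by refine ⟨?_, ?_⟩ <;> simp [memS, ha, hb, n01, n02, n10, n12, n20, n21] <;> try ring, ?_⟩
    rintro ⟨i, j⟩ ⟨hp, hq⟩
    simp [memS, ha, hb, n01, n02, n10, n12, n20, n21] at hp hq
    simp only [Prod.mk.injEq]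
    exact ⟨by linear_combination -hp, by linear_combination hp + hq⟩
  · -- colors (1,0), witness (q.2, p.2)
    refine ⟨(q.2, p.2),
      by refine ⟨?_, ?_⟩ <;> simp [memS, ha, hb, n01, n02, n10, n12, n20, n21] <;> try ring, ?_⟩
    rintro ⟨i, j⟩ ⟨hp, hq⟩
    simp [memS, ha, hb, n01, n02, n10, n12, n20, n21] at hp hq
    simp only [Prod.mk.injEq]
    exact ⟨by linear_combination -hq, by linear_combination -hp⟩
  · exact absurd (ha.trans hb.symm) hne
  · -- colors (1,2), witness (-p.2 - q.2, p.2)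
    refine ⟨(-p.2 - q.2, p.2),
      by refine ⟨?_, ?_⟩ <;> simp [memS, ha, hb, n01, n02, n10, n12, n20, n21] <;> try ring, ?_⟩
    rintro ⟨i, j⟩ ⟨hp, hq⟩
    simp [memS, ha, hb, n01, n02, n10, n12, n20, n21] at hp hq
    simp only [Prod.mk.injEq]
    exact ⟨by linear_combination hp + hq, by linear_combination -hp⟩
  · -- colors (2,0), witness (q.2, -p.2 - q.2)
    refine ⟨(q.2, -p.2 - q.2),
      by refine ⟨?_, ?_⟩ <;> simp [memS, ha, hb, n01, n02, n10, n12, n20, n21] <;> try ring, ?_⟩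
    rintro ⟨i, j⟩ ⟨hp, hq⟩
    simp [memS, ha, hb, n01, n02, n10, n12, n20, n21] at hp hq
    simp only [Prod.mk.injEq]
    exact ⟨by linear_combination -hq, by linear_combination hp + hq⟩
  · -- colors (2,1), witness (-p.2 - q.2, q.2)
    refine ⟨(-p.2 - q.2, q.2),
      by refine ⟨?_, ?_⟩ <;> simp [memS, ha, hb, n01, n02, n10, n12, n20, n21] <;> try ring, ?_⟩
    rintro ⟨i, j⟩ ⟨hp, hq⟩
    simp [memS, ha, hb, n01, n02, n10, n12, n20, n21] at hp hq
    simp only [Prod.mk.injEq]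
    exact ⟨by linear_combination hp + hq, by linear_combination -hq⟩
  · exact absurd (ha.trans hb.symm) hne
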